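/- For every integer m ≥ 1, the generating function of the antidiagonal sums a_n = Σ_{k=0}^{⌊n/2⌋} B_m(n−k, k) of the m-th triangle of the first family is 1/((1+x²+⋯+x^{2(m−1)})(1−x−x²)); that is, in the ring of formal power series over ℤ, (1 + X² + X⁴ + ⋯ + X^{2(m−1)})·(1 − X − X²) · Σ_{n≥0} a_n X^n = 1. -/

import Mathlib

open PowerSeries


/-- The `m`-th Pascal-like triangle of the first family: `B m n 0 = 1`,
`B m n n = 1` if `m ∣ n` and `0` otherwise, and Pascal's recurrence
`B m n k = B m (n-1) k + B m (n-1) (k-1)` for `0 < k < n`.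
(Values with `k > n` are set to `0`.) -/
def B (m : ℕ) : ℕ → ℕ → ℕ
  | _, 0 => 1
  | 0, _ + 1 => 0
  | n + 1, k + 1 =>
      if n + 1 = k + 1 then (if m ∣ (n + 1) then 1 else 0)
      else if n + 1 < k + 1 then 0
      else B m n (k + 1) + B m n k

lemma B_zero (m n : ℕ) : B m n 0 = 1 := by cases n <;> rfl

lemma B_diag (m n : ℕ) : B m n n = if m ∣ n then 1 else 0 := by
  cases n with
  | zero => simp [B]
  | succ n => simp [B]

lemma B_pascal (m n k : ℕ) (h : k + 1 < n + 1) :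
    B m (n + 1) (k + 1) = B m n (k + 1) + B m n k := by
  rw [B]
  rw [if_neg (by omega), if_neg (by omega)]

def aN (m n : ℕ) : ℕ := ∑ k ∈ Finset.range (n / 2 + 1), B m (n - k) k

lemma aN_odd (m t : ℕ) : aN m (2 * t + 3) = aN m (2 * t + 2) + aN m (2 * t + 1) := by
  have h3 : (2 * t + 3) / 2 + 1 = t + 2 := by omega
  have h2 : (2 * t + 2) / 2 + 1 = t + 2 := by omega
  have h1 : (2 * t + 1) / 2 + 1 = t + 1 := by omega
  rw [aN, aN, aN, h3, h2, h1]
  rw [Finset.sum_range_succ' (fun k => B m (2 * t + 3 - k) k) (t + 1)]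
  have step : ∀ k ∈ Finset.range (t + 1),
      B m (2 * t + 3 - (k + 1)) (k + 1)
        = B m (2 * t + 1 - k) (k + 1) + B m (2 * t + 1 - k) k := by
    intro k hk
    simp only [Finset.mem_range] at hk
    have e : 2 * t + 3 - (k + 1) = (2 * t + 1 - k) + 1 := by omega
    rw [e, B_pascal m _ k (by omega)]
  rw [Finset.sum_congr rfl step, Finset.sum_add_distrib]
  rw [Finset.sum_range_succ' (fun k => B m (2 * t + 2 - k) k) (t + 1)]
  have e2 : ∀ k ∈ Finset.range (t + 1),
      B m (2 * t + 2 - (k + 1)) (k + 1) = B m (2 * t + 1 - k) (k + 1) := by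
    intro k hk; congr 1; omega
  rw [Finset.sum_congr rfl e2, B_zero, B_zero]
  have e1 : ∀ k ∈ Finset.range (t + 1),
      B m (2 * t + 1 - k) k = B m (2 * t + 1 - k) k := fun _ _ => rfl
  ring

lemma aN_even (m t : ℕ) :
    aN m (2 * t + 2) + (if m ∣ t then 1 else 0)
      = aN m (2 * t + 1) + aN m (2 * t) + (if m ∣ (t + 1) then 1 else 0) := by
  have h2 : (2 * t + 2) / 2 + 1 = t + 2 := by omega
  have h1 : (2 * t + 1) / 2 + 1 = t + 1 := by omega
  have h0 : (2 * t) / 2 + 1 = t + 1 := by omega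
  rw [aN, aN, aN, h2, h1, h0]
  rw [Finset.sum_range_succ (fun k => B m (2 * t + 2 - k) k) (t + 1)]
  have ed : 2 * t + 2 - (t + 1) = t + 1 := by omega
  rw [ed, B_diag]
  rw [Finset.sum_range_succ' (fun k => B m (2 * t + 2 - k) k) t]
  have step : ∀ k ∈ Finset.range t,
      B m (2 * t + 2 - (k + 1)) (k + 1)
        = B m (2 * t - k) (k + 1) + B m (2 * t - k) k := by
    intro k hk
    simp only [Finset.mem_range] at hk
    have e : 2 * t + 2 - (k + 1) = (2 * t - k) + 1 := by omega
    rw [e, B_pascal m _ k (by omega)]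
  rw [Finset.sum_congr rfl step, Finset.sum_add_distrib, B_zero]
  -- first sum: ∑_{k<t} B (2t-k) (k+1) + 1 = aN (2t+1)
  have A1 : ∑ k ∈ Finset.range (t + 1), B m (2 * t + 1 - k) k
      = (∑ k ∈ Finset.range t, B m (2 * t - k) (k + 1)) + 1 := by
    rw [Finset.sum_range_succ' (fun k => B m (2 * t + 1 - k) k) t, B_zero]
    congr 1
    apply Finset.sum_congr rfl
    intro k hk; congr 1; omega
  -- second sum: ∑_{k<t+1} B (2t-k) k = ∑_{k<t} B (2t-k) k + [m ∣ t]
  have A0 : ∑ k ∈ Finset.range (t + 1), B m (2 * t - k) k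
      = (∑ k ∈ Finset.range t, B m (2 * t - k) k) + (if m ∣ t then 1 else 0) := by
    rw [Finset.sum_range_succ]
    have : 2 * t - t = t := by omega
    rw [this, B_diag]
  rw [A1, A0]
  ring

lemma aN_zero (m : ℕ) : aN m 0 = 1 := by simp [aN, B_zero]
lemma aN_one (m : ℕ) : aN m 1 = 1 := by simp [aN, B_zero]

def E (m n : ℕ) : ℤ :=
  (if 2 * m ∣ n then 1 else 0) - (if 2 ≤ n ∧ 2 * m ∣ n - 2 then 1 else 0)

lemma step1 (m : ℕ) (hm : 1 ≤ m) :
    ((1 : ℤ⟦X⟧) - X - X ^ 2) * PowerSeries.mk (fun n => (aN m n : ℤ))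
      = PowerSeries.mk (E m) := by
  set f : ℤ⟦X⟧ := PowerSeries.mk (fun n => (aN m n : ℤ)) with hf
  have key : ((1 : ℤ⟦X⟧) - X - X ^ 2) * f = f - f * X ^ 1 - f * X ^ 2 := by ring
  rw [key]
  ext n
  rw [map_sub, map_sub, coeff_mul_X_pow', coeff_mul_X_pow']
  simp only [hf, coeff_mk, constantCoeff_mk]
  match n with
  | 0 =>
    simp only [if_neg (by omega : ¬ (1:ℕ) ≤ 0), if_neg (by omega : ¬ (2:ℕ) ≤ 0)]
    simp [E, aN_zero, Nat.dvd_zero, (by omega : ¬ ((2:ℕ) ≤ 0 ∧ 2*m ∣ 0 - 2))]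
  | 1 =>
    rw [if_pos (le_refl 1), if_neg (by omega : ¬ (2:ℕ) ≤ 1)]
    have h1 : ¬ (2 * m ∣ 1) := by
      intro h; have := Nat.le_of_dvd one_pos h; omega
    simp [E, aN_zero, aN_one, h1, (by omega : ¬ ((2:ℕ) ≤ 1 ∧ 2*m ∣ 1 - 2))]
  | (n + 2) =>
    rw [if_pos (by omega : (1:ℕ) ≤ n + 2), if_pos (by omega : (2:ℕ) ≤ n + 2)]
    have e1 : n + 2 - 1 = n + 1 := by omega
    have e2 : n + 2 - 2 = n := by omega
    rw [e1, e2]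
    rcases Nat.even_or_odd n with ⟨t, ht⟩ | ⟨t, ht⟩
    · -- n = 2t, index n+2 = 2t+2
      subst ht
      have h2 : t + t + 2 = 2 * t + 2 := by omega
      have h1 : t + t + 1 = 2 * t + 1 := by omega
      have h0 : t + t = 2 * t := by omega
      rw [h2, h1, h0]
      have := aN_even m t
      have hE : E m (2 * t + 2)
          = (if m ∣ (t + 1) then (1:ℤ) else 0) - (if m ∣ t then 1 else 0) := by
        unfold E
        have d1 : (2 * m ∣ 2 * t + 2) ↔ (m ∣ t + 1) := by
          rw [(by ring : 2 * t + 2 = 2 * (t + 1)),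
            Nat.mul_dvd_mul_iff_left (by norm_num : 0 < 2)]
        have d0 : ((2:ℕ) ≤ 2 * t + 2 ∧ 2 * m ∣ 2 * t + 2 - 2) ↔ (m ∣ t) := by
          rw [(by omega : 2 * t + 2 - 2 = 2 * t),
            Nat.mul_dvd_mul_iff_left (by norm_num : (0:ℕ) < 2)]
          constructor
          · exact fun h => h.2
          · exact fun h => ⟨by omega, h⟩
        rw [if_congr d1 rfl rfl, if_congr d0 rfl rfl]
      rw [hE]
      split_ifs at this ⊢ <;> push_cast <;> omega
    · -- n = 2t+1, index n+2 = 2t+3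
      subst ht
      have h3 : 2 * t + 1 + 2 = 2 * t + 3 := by omega
      have h2 : 2 * t + 1 + 1 = 2 * t + 2 := by omega
      rw [h3, h2]
      have := aN_odd m t
      have hE : E m (2 * t + 3) = 0 := by
        unfold E
        have h1 : ¬ (2 * m ∣ 2 * t + 3) := by
          intro h
          have h2 : (2:ℕ) ∣ 2 * t + 3 := dvd_trans ⟨m, rfl⟩ h
          omega
        have h0 : ¬ (2 * m ∣ 2 * t + 1) := by
          intro h
          have h2 : (2:ℕ) ∣ 2 * t + 1 := dvd_trans ⟨m, rfl⟩ h
          omega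
        simp [h1, h0]
      rw [hE]
      omega

lemma step2 (m : ℕ) (hm : 1 ≤ m) :
    (∑ i ∈ Finset.range m, (X : ℤ⟦X⟧) ^ (2 * i)) * PowerSeries.mk (E m) = 1 := by
  ext N
  rw [Finset.sum_mul, map_sum]
  have hterm : ∀ i ∈ Finset.range m,
      (coeff N) ((X : ℤ⟦X⟧) ^ (2 * i) * PowerSeries.mk (E m))
        = (if 2 * i ≤ N ∧ 2 * m ∣ N - 2 * i then (1:ℤ) else 0)
          - (if 2 * (i + 1) ≤ N ∧ 2 * m ∣ N - 2 * (i + 1) then (1:ℤ) else 0) := by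
    intro i _
    rw [coeff_X_pow_mul', coeff_mk]
    by_cases h : 2 * i ≤ N
    · rw [if_pos h]
      unfold E
      congr 1
      · apply if_congr _ rfl rfl
        constructor
        · intro hd; exact ⟨h, hd⟩
        · exact fun h' => h'.2
      · apply if_congr _ rfl rfl
        constructor
        · rintro ⟨h2, hd⟩
          exact ⟨by omega, by rwa [(by omega : N - 2 * i - 2 = N - 2 * (i + 1))] at hd⟩
        · rintro ⟨h2, hd⟩
          exact ⟨by omega, by rwa [(by omega : N - 2 * i - 2 = N - 2 * (i + 1))]⟩
    · rw [if_neg h, if_neg (by omega), if_neg (by omega), sub_zero]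
  rw [Finset.sum_congr rfl hterm, Finset.sum_range_sub'
    (fun i => (if 2 * i ≤ N ∧ 2 * m ∣ N - 2 * i then (1:ℤ) else 0))]
  simp only [Nat.mul_zero, Nat.sub_zero, Nat.zero_le, true_and]
  rw [PowerSeries.coeff_one]
  match N with
  | 0 =>
    rw [if_pos (Nat.dvd_zero _), if_neg (by omega), if_pos rfl]
    ring
  | (N + 1) =>
    rw [if_neg (by omega : ¬ (N + 1 = 0))]
    by_cases hd : 2 * m ∣ N + 1
    · have hle : 2 * m ≤ N + 1 := Nat.le_of_dvd (by omega) hd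
      rw [if_pos hd, if_pos ⟨hle, (Nat.dvd_sub hd dvd_rfl)⟩]
      ring
    · rw [if_neg hd, if_neg]
      · ring
      · rintro ⟨hle, c, hc⟩
        refine hd ⟨c + 1, ?_⟩
        rw [Nat.mul_add, Nat.mul_one]
        omega

/-- The generating function of the antidiagonal sums of the `m`-th triangle of
the first family is `1/((1 + x² + ⋯ + x^(2(m-1)))(1 - x - x²))`. -/
theorem stmt_5 (m : ℕ) (hm : 1 ≤ m) :
    (∑ i ∈ Finset.range m, PowerSeries.X ^ (2 * i)) *
        (1 - PowerSeries.X - PowerSeries.X ^ 2) *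
      PowerSeries.mk
        (fun n => ((∑ k ∈ Finset.range (n / 2 + 1), B m (n - k) k : ℕ) : ℤ)) = 1 := by
  have hmk : (PowerSeries.mk
      (fun n => ((∑ k ∈ Finset.range (n / 2 + 1), B m (n - k) k : ℕ) : ℤ)))
      = PowerSeries.mk (fun n => (aN m n : ℤ)) := rfl
  rw [hmk, mul_assoc, step1 m hm, step2 m hm]
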